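/- Let $G$ be a graph with at least one edge, $S\subset V(G)$ such that $G-S$ is disconnected, and let $X,Y$ be disjoint nonempty vertex sets with $X\cup Y=V(G)\setminus S$, no edges between $X$ and $Y$, and $|X|\leq|Y|$. Then $|S|\geq \frac{2\mu_{n-1}}{\mu_1-\mu_{n-1}}|X|$, where $\mu_1$ and $\mu_{n-1}$ are the largest Laplacian eigenvalue and the algebraic connectivity of $G$. -/

import Mathlib

open SimpleGraph

/-- The `(i+1)`-th largest eigenvalue (counted with multiplicity) of a Hermitian real
matrix; junk value `0` when out of range. -/
noncomputable def kthLargestEig {n : ℕ} (A : Matrix (Fin n) (Fin n) ℝ)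
    (hA : A.IsHermitian) (i : ℕ) : ℝ :=
  if h : n - 1 - i < n then
    (hA.eigenvalues ∘ Tuple.sort hA.eigenvalues) ⟨n - 1 - i, h⟩
  else 0

lemma lapMatrix_isHermitian {n : ℕ} (G : SimpleGraph (Fin n)) [DecidableRel G.Adj] :
    (G.lapMatrix ℝ).IsHermitian :=
  (G.posSemidef_lapMatrix ℝ).1

open Matrix Finset

section spectral

variable {n : ℕ} {A : Matrix (Fin n) (Fin n) ℝ} (hA : A.IsHermitian)

/-- coefficients of v in the eigenbasis -/
noncomputable def eigCoeff (v : Fin n → ℝ) : Fin n → ℝ :=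
  (star (hA.eigenvectorUnitary : Matrix (Fin n) (Fin n) ℝ)) *ᵥ v

lemma eigCoeff_eq (v : Fin n → ℝ) (j : Fin n) :
    eigCoeff hA v j = ⇑(hA.eigenvectorBasis j) ⬝ᵥ v := by
  simp [eigCoeff, mulVec, dotProduct, Matrix.star_apply]

lemma quadform_eq_sum (v : Fin n → ℝ) :
    v ⬝ᵥ (A *ᵥ v) = ∑ j, hA.eigenvalues j * (eigCoeff hA v j)^2 := by
  set U : Matrix (Fin n) (Fin n) ℝ := (hA.eigenvectorUnitary : Matrix (Fin n) (Fin n) ℝ) with hU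
  have hAeq := hA.spectral_theorem
  have hstar : star U = Uᵀ := by
    rw [hU, ← conjTranspose_eq_transpose_of_trivial]; rfl
  calc v ⬝ᵥ (A *ᵥ v)
      = v ⬝ᵥ ((U * diagonal (RCLike.ofReal ∘ hA.eigenvalues) * star U) *ᵥ v) := by
        conv_lhs => rw [hAeq, Unitary.conjStarAlgAut_apply]
    _ = v ⬝ᵥ (U *ᵥ (diagonal (RCLike.ofReal ∘ hA.eigenvalues) *ᵥ (star U *ᵥ v))) := by
        rw [← mulVec_mulVec, ← mulVec_mulVec]
    _ = (v ᵥ* U) ⬝ᵥ (diagonal (RCLike.ofReal ∘ hA.eigenvalues) *ᵥ (star U *ᵥ v)) := by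
        rw [dotProduct_mulVec]
    _ = (eigCoeff hA v) ⬝ᵥ (diagonal (RCLike.ofReal ∘ hA.eigenvalues) *ᵥ (eigCoeff hA v)) := by
        rw [eigCoeff, hstar, mulVec_transpose]
    _ = ∑ j, hA.eigenvalues j * (eigCoeff hA v j)^2 := by
        simp only [dotProduct, mulVec_diagonal, Function.comp_apply, RCLike.ofReal_real_eq_id,
          id_eq]
        congr 1; ext j; ring

lemma dot_self_eq_sum (v : Fin n → ℝ) :
    v ⬝ᵥ v = ∑ j, (eigCoeff hA v j)^2 := by
  set U : Matrix (Fin n) (Fin n) ℝ := (hA.eigenvectorUnitary : Matrix (Fin n) (Fin n) ℝ) with hU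
  have hstar : star U = Uᵀ := by
    rw [hU, ← conjTranspose_eq_transpose_of_trivial]; rfl
  have huni : U * star U = 1 := (Matrix.mem_unitaryGroup_iff).mp (hA.eigenvectorUnitary).2
  calc v ⬝ᵥ v = v ⬝ᵥ ((U * star U) *ᵥ v) := by rw [huni, one_mulVec]
    _ = v ⬝ᵥ (U *ᵥ (star U *ᵥ v)) := by rw [← mulVec_mulVec]
    _ = (v ᵥ* U) ⬝ᵥ (star U *ᵥ v) := by rw [dotProduct_mulVec]
    _ = (eigCoeff hA v) ⬝ᵥ (eigCoeff hA v) := by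
        rw [eigCoeff, hstar, mulVec_transpose]
    _ = ∑ j, (eigCoeff hA v j)^2 := by
        simp only [dotProduct]; congr 1; ext j; ring

lemma eig_le_kthLargest_zero (hn : 0 < n) (j : Fin n) :
    hA.eigenvalues j ≤ kthLargestEig A hA 0 := by
  have h : n - 1 - 0 < n := by omega
  rw [kthLargestEig, dif_pos h]
  have hm := Tuple.monotone_sort hA.eigenvalues
  have hle : (Tuple.sort hA.eigenvalues)⁻¹ j ≤ ⟨n - 1 - 0, h⟩ := by
    rw [Fin.le_def]
    have := ((Tuple.sort hA.eigenvalues)⁻¹ j).isLt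
    simp; omega
  have := hm hle
  simpa using this

lemma rayleigh_upper (hn : 0 < n) (v : Fin n → ℝ) :
    v ⬝ᵥ (A *ᵥ v) ≤ kthLargestEig A hA 0 * (v ⬝ᵥ v) := by
  rw [quadform_eq_sum hA, dot_self_eq_sum hA, Finset.mul_sum]
  apply Finset.sum_le_sum
  intro j _
  have h1 := eig_le_kthLargest_zero hA hn j
  nlinarith [sq_nonneg (eigCoeff hA v j)]

end spectral

section lowerbound

variable {n : ℕ} (G : SimpleGraph (Fin n)) [DecidableRel G.Adj]

lemma lap_quadform_nonneg (v : Fin n → ℝ) : 0 ≤ v ⬝ᵥ (G.lapMatrix ℝ *ᵥ v) := by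
  rw [← toLinearMap₂'_apply', lapMatrix_toLinearMap₂']
  positivity

lemma exists_eigenvalue_zero (hn : 0 < n) :
    ∃ j, (lapMatrix_isHermitian G).eigenvalues j = 0 := by
  have hdet : (G.lapMatrix ℝ).det = 0 := by
    rw [← Matrix.exists_mulVec_eq_zero_iff]
    refine ⟨fun _ => 1, ?_, G.lapMatrix_mulVec_const_eq_zero⟩
    intro h
    exact one_ne_zero (congrFun h ⟨0, hn⟩)
  have hprod := (lapMatrix_isHermitian G).det_eq_prod_eigenvalues
  rw [hdet] at hprod
  obtain ⟨j, -, hj⟩ := Finset.prod_eq_zero_iff.mp hprod.symm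
  exact ⟨j, hj⟩

lemma lap_toLin'_eq_mulVecLin :
    Matrix.toLin' (G.lapMatrix ℝ) = (G.lapMatrix ℝ).mulVecLin := by
  ext v
  simp [Matrix.toLin'_apply, Matrix.mulVecLin_apply]

lemma lap_kernel_const (hn : 0 < n) (i₀ : Fin n)
    (hother : ∀ j, j ≠ i₀ → (lapMatrix_isHermitian G).eigenvalues j ≠ 0)
    (w : Fin n → ℝ) (hw : G.lapMatrix ℝ *ᵥ w = 0) : ∀ i j : Fin n, w i = w j := by
  classical
  have hcard1 : Fintype.card {i // (lapMatrix_isHermitian G).eigenvalues i = 0} ≤ 1 := by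
    apply Fintype.card_le_one_iff.mpr
    rintro ⟨i, hi⟩ ⟨j, hj⟩
    have hii : i = i₀ := by_contra fun h => (hother i h) hi
    have hjj : j = i₀ := by_contra fun h => (hother j h) hj
    simp [hii, hjj]
  have hrank : n - 1 ≤ (G.lapMatrix ℝ).rank := by
    rw [(lapMatrix_isHermitian G).rank_eq_card_non_zero_eigs]
    have hcc : Fintype.card {i // (lapMatrix_isHermitian G).eigenvalues i ≠ 0}
        = Fintype.card (Fin n)
          - Fintype.card {i // (lapMatrix_isHermitian G).eigenvalues i = 0} := by
      simp only [ne_eq]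
      exact Fintype.card_subtype_compl _
    have hcf : Fintype.card (Fin n) = n := Fintype.card_fin n
    omega
  have hrn := LinearMap.finrank_range_add_finrank_ker ((G.lapMatrix ℝ).mulVecLin)
  have hdom : Module.finrank ℝ (Fin n → ℝ) = n := by
    simp [Module.finrank_fintype_fun_eq_card]
  rw [hdom] at hrn
  have hrankdef : (G.lapMatrix ℝ).rank
      = Module.finrank ℝ (LinearMap.range (G.lapMatrix ℝ).mulVecLin) := rfl
  have hker1 : Module.finrank ℝ (LinearMap.ker (Matrix.toLin' (G.lapMatrix ℝ))) ≤ 1 := by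
    rw [lap_toLin'_eq_mulVecLin]
    omega
  have hcomp := G.card_connectedComponent_eq_finrank_ker_toLin'_lapMatrix
  have hcompcard : Fintype.card G.ConnectedComponent ≤ 1 := by omega
  have hreach : ∀ i j : Fin n, G.Reachable i j := by
    intro i j
    have := Fintype.card_le_one_iff.mp hcompcard (G.connectedComponentMk i)
      (G.connectedComponentMk j)
    exact (SimpleGraph.ConnectedComponent.eq).mp this
  have hzero : Matrix.toLin' (G.lapMatrix ℝ) w = 0 := by
    rw [Matrix.toLin'_apply]
    exact hw
  exact fun i j =>
    (G.lapMatrix_mulVec_eq_zero_iff_forall_reachable (x := w)).mp hzero i j (hreach i j)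

lemma rayleigh_lower (hn : 2 ≤ n) (v : Fin n → ℝ) (hv : ∑ i, v i = 0) :
    kthLargestEig (G.lapMatrix ℝ) (lapMatrix_isHermitian G) (n - 2) * (v ⬝ᵥ v)
      ≤ v ⬝ᵥ (G.lapMatrix ℝ *ᵥ v) := by
  have hA := lapMatrix_isHermitian G
  have h1n : n - 1 - (n - 2) < n := by omega
  have hidx : n - 1 - (n - 2) = 1 := by omega
  set μ := kthLargestEig (G.lapMatrix ℝ) (lapMatrix_isHermitian G) (n - 2) with hμdef
  have hμval : μ = ((lapMatrix_isHermitian G).eigenvalues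
      ∘ Tuple.sort (lapMatrix_isHermitian G).eigenvalues) ⟨1, by omega⟩ := by
    rw [hμdef, kthLargestEig, dif_pos h1n]
    congr 1
    exact Fin.ext hidx
  have hvv : 0 ≤ v ⬝ᵥ v := by
    simp only [dotProduct]
    exact Finset.sum_nonneg fun i _ => mul_self_nonneg _
  rcases le_or_gt μ 0 with hμ | hμ
  · calc μ * (v ⬝ᵥ v) ≤ 0 := mul_nonpos_of_nonpos_of_nonneg hμ hvv
      _ ≤ _ := lap_quadform_nonneg G v
  · -- main case
    have hm := Tuple.monotone_sort (lapMatrix_isHermitian G).eigenvalues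
    set σ := Tuple.sort (lapMatrix_isHermitian G).eigenvalues with hσ
    set i₀ := σ ⟨0, by omega⟩ with hi₀
    have heig0 : (lapMatrix_isHermitian G).eigenvalues i₀ = 0 := by
      obtain ⟨j, hj⟩ := exists_eigenvalue_zero G (by omega)
      have h1 : (lapMatrix_isHermitian G).eigenvalues i₀
          ≤ (lapMatrix_isHermitian G).eigenvalues j := by
        have hle : (⟨0, by omega⟩ : Fin n) ≤ σ⁻¹ j := Fin.le_def.mpr (Nat.zero_le _)
        have := hm hle
        simpa [hσ] using this
      have h2 : 0 ≤ (lapMatrix_isHermitian G).eigenvalues i₀ :=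
        (G.posSemidef_lapMatrix ℝ).eigenvalues_nonneg i₀
      rw [hj] at h1
      linarith
    have hother : ∀ j, j ≠ i₀ → μ ≤ (lapMatrix_isHermitian G).eigenvalues j := by
      intro j hj
      have hne : σ⁻¹ j ≠ ⟨0, by omega⟩ := by
        intro h
        apply hj
        rw [hi₀, ← h]
        exact (σ.apply_symm_apply j).symm
      have hne' : 1 ≤ (σ⁻¹ j).val := by
        rcases Nat.eq_zero_or_pos (σ⁻¹ j).val with h0 | h0
        · exact absurd (Fin.ext h0) hne
        · exact h0
      have hle : (⟨1, by omega⟩ : Fin n) ≤ σ⁻¹ j := Fin.le_def.mpr hne'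
      have := hm hle
      rw [hμval]
      simpa [hσ] using this
    have hker := lap_kernel_const G (by omega) i₀
      (fun j hj => by have := hother j hj; intro h0; rw [h0] at this; linarith)
    set w : Fin n → ℝ := ⇑((lapMatrix_isHermitian G).eigenvectorBasis i₀) with hwdef
    have hcoeff0 : eigCoeff (lapMatrix_isHermitian G) v i₀ = 0 := by
      have hw : G.lapMatrix ℝ *ᵥ w = 0 := by
        rw [hwdef, (lapMatrix_isHermitian G).mulVec_eigenvectorBasis, heig0, zero_smul]
      have hconst := hker w hw
      rw [eigCoeff_eq]
      calc w ⬝ᵥ v = ∑ i, w ⟨0, by omega⟩ * v i := by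
            simp only [dotProduct]
            exact Finset.sum_congr rfl fun i _ => by rw [hconst i ⟨0, by omega⟩]
        _ = w ⟨0, by omega⟩ * ∑ i, v i := by rw [Finset.mul_sum]
        _ = 0 := by rw [hv, mul_zero]
    rw [quadform_eq_sum (lapMatrix_isHermitian G), dot_self_eq_sum (lapMatrix_isHermitian G),
      Finset.mul_sum]
    apply Finset.sum_le_sum
    intro j _
    rcases eq_or_ne j i₀ with rfl | hj
    · rw [hcoeff0]; simp
    · have := hother j hj
      nlinarith [sq_nonneg (eigCoeff (lapMatrix_isHermitian G) v j)]

end lowerbound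



lemma posdef_aux (u v w x y : ℝ) (hu : 0 < u) (hdet : 0 < u*w - v*v)
    (hxy : ¬(x = 0 ∧ y = 0)) : 0 < u*x^2 + 2*v*x*y + w*y^2 := by
  have key : u*(u*x^2 + 2*v*x*y + w*y^2) = (u*x + v*y)^2 + (u*w - v*v)*y^2 := by ring
  by_cases hy : y = 0
  · have hx : x ≠ 0 := fun hx => hxy ⟨hx, hy⟩
    subst hy
    have h2 : u*(u*x^2 + 2*v*x*0 + w*0^2) = (u*x)^2 := by ring
    have h3 : 0 < (u*x)^2 := by positivity
    nlinarith [h2, h3]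
  · have h3 : 0 < (u*w - v*v)*y^2 := by positivity
    nlinarith [sq_nonneg (u*x + v*y), key]

lemma sqrt_compare_aux (x y : ℝ) (hx : 0 ≤ x) (hy : 0 ≤ y) (h : x^2 ≤ y^2) : x ≤ y := by
  nlinarith

set_option maxHeartbeats 1000000 in
lemma gu_liu_core (a b s e1 e2 μ M : ℝ)
    (ha : 1 ≤ a) (hab : a ≤ b) (hs : 0 ≤ s)
    (he1 : 0 ≤ e1) (he1' : e1 ≤ a * s) (he2 : 0 ≤ e2) (he2' : e2 ≤ b * s)
    (hμ : 0 < μ)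
    (H1 : ∀ α β γ : ℝ, a*α + s*β + b*γ = 0 →
      μ * (a*α^2 + s*β^2 + b*γ^2) ≤ e1*(α-β)^2 + e2*(β-γ)^2)
    (H2 : ∀ α β γ : ℝ,
      e1*(α-β)^2 + e2*(β-γ)^2 ≤ M * (a*α^2 + s*β^2 + b*γ^2)) :
    2*μ*a ≤ s*(M-μ) := by
  have hb : (1:ℝ) ≤ b := ha.trans hab
  have ha0 : 0 < a := lt_of_lt_of_le one_pos ha
  have hb0 : 0 < b := lt_of_lt_of_le one_pos hb
  -- s is positive
  have hspos : 0 < s := by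
    rcases lt_or_eq_of_le hs with h | h
    · exact h
    · exfalso
      have hs0 : s = 0 := h.symm
      subst hs0
      simp only [mul_zero] at he1' he2'
      have hE1 : e1 = 0 := le_antisymm he1' he1
      have hE2 : e2 = 0 := le_antisymm he2' he2
      have hcon := H1 b 0 (-a) (by ring)
      rw [hE1, hE2] at hcon
      have hposq : 0 < a*b^2 + (0:ℝ)*0^2 + b*(-a)^2 := by positivity
      linarith [mul_pos hμ hposq]
  obtain ⟨nn, hnn⟩ : ∃ nn : ℝ, nn = a + b + s := ⟨_, rfl⟩
  obtain ⟨A2, hA2⟩ : ∃ A2 : ℝ, A2 = a*b*s := ⟨_, rfl⟩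
  obtain ⟨B2, hB2⟩ : ∃ B2 : ℝ, B2 = e1*b*(a+s) + e2*a*(b+s) := ⟨_, rfl⟩
  obtain ⟨C2, hC2⟩ : ∃ C2 : ℝ, C2 = nn*e1*e2 := ⟨_, rfl⟩
  have hA2pos : 0 < A2 := by rw [hA2]; positivity
  have hB2nn : 0 ≤ B2 := by rw [hB2]; positivity
  have hnn0 : 0 < nn := by rw [hnn]; linarith
  have hC2nn : 0 ≤ C2 := by rw [hC2]; positivity
  obtain ⟨d, hd⟩ : ∃ d : ℝ, d = B2^2 - 4*A2*C2 := ⟨_, rfl⟩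
  have hdnn : 0 ≤ d := by
    have amgm : B2^2 - 4*(e1*e2*a*b*(a+s)*(b+s)) = (e1*b*(a+s) - e2*a*(b+s))^2 := by
      rw [hB2]; ring
    have t2 : 4*(e1*e2*a*b*(a+s)*(b+s)) - 4*A2*C2 = 4*(e1*e2)*((a*b)*(a*b)) := by
      rw [hA2, hC2, hnn]; ring
    rw [hd]
    linarith [sq_nonneg (e1*b*(a+s) - e2*a*(b+s)), amgm, t2,
      mul_nonneg (mul_nonneg (mul_nonneg (by norm_num : (0:ℝ) ≤ 4) he1) he2)
        (mul_nonneg (mul_nonneg ha0.le hb0.le) (mul_nonneg ha0.le hb0.le))]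
  have hsq : Real.sqrt d ^ 2 = d := Real.sq_sqrt hdnn
  have hsqnn : 0 ≤ Real.sqrt d := Real.sqrt_nonneg d
  obtain ⟨θ2, hθ2⟩ : ∃ t : ℝ, t = (B2 - Real.sqrt d)/(2*A2) := ⟨_, rfl⟩
  obtain ⟨θ1, hθ1⟩ : ∃ t : ℝ, t = (B2 + Real.sqrt d)/(2*A2) := ⟨_, rfl⟩
  have hA2ne : (2*A2) ≠ 0 := by positivity
  have hlin2 : 2*A2*θ2 = B2 - Real.sqrt d := by rw [hθ2]; field_simp
  have hlin1 : 2*A2*θ1 = B2 + Real.sqrt d := by rw [hθ1]; field_simp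
  have hroot2 : A2*θ2^2 - B2*θ2 + C2 = 0 := by
    have h4 : 4*A2*(A2*θ2^2 - B2*θ2 + C2)
        = (2*A2*θ2)^2 - 2*B2*(2*A2*θ2) + 4*A2*C2 := by ring
    rw [hlin2] at h4
    have h5 : (B2 - Real.sqrt d)^2 - 2*B2*(B2 - Real.sqrt d) + 4*A2*C2 = 0 := by
      have : (B2 - Real.sqrt d)^2 - 2*B2*(B2 - Real.sqrt d) + 4*A2*C2
          = Real.sqrt d^2 - B2^2 + 4*A2*C2 := by ring
      rw [this, hsq, hd]; ring
    rw [h5] at h4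
    have := mul_eq_zero.mp h4
    rcases this with h | h
    · exact absurd h (by positivity)
    · exact h
  have hroot1 : A2*θ1^2 - B2*θ1 + C2 = 0 := by
    have h4 : 4*A2*(A2*θ1^2 - B2*θ1 + C2)
        = (2*A2*θ1)^2 - 2*B2*(2*A2*θ1) + 4*A2*C2 := by ring
    rw [hlin1] at h4
    have h5 : (B2 + Real.sqrt d)^2 - 2*B2*(B2 + Real.sqrt d) + 4*A2*C2 = 0 := by
      have : (B2 + Real.sqrt d)^2 - 2*B2*(B2 + Real.sqrt d) + 4*A2*C2
          = Real.sqrt d^2 - B2^2 + 4*A2*C2 := by ring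
      rw [this, hsq, hd]; ring
    rw [h5] at h4
    rcases mul_eq_zero.mp h4 with h | h
    · exact absurd h (by positivity)
    · exact h
  -- generalized eigenvector construction
  have key : ∀ θ : ℝ, A2*θ^2 - B2*θ + C2 = 0 →
      ∃ α β γ : ℝ, a*α + s*β + b*γ = 0 ∧ 0 < a*α^2 + s*β^2 + b*γ^2 ∧
        e1*(α-β)^2 + e2*(β-γ)^2 = θ * (a*α^2 + s*β^2 + b*γ^2) := by
    intro θ hroot
    obtain ⟨P11, hP11⟩ : ∃ t : ℝ, t = nn*e1 - θ*a*(b+s) := ⟨_, rfl⟩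
    obtain ⟨P12, hP12⟩ : ∃ t : ℝ, t = θ*a*b := ⟨_, rfl⟩
    obtain ⟨P22, hP22⟩ : ∃ t : ℝ, t = nn*e2 - θ*b*(a+s) := ⟨_, rfl⟩
    have hdet : P11*P22 - P12^2 = 0 := by
      have h : P11*P22 - P12^2 = nn*(A2*θ^2 - B2*θ + C2) := by
        rw [hP11, hP12, hP22, hA2, hB2, hC2, hnn]; ring
      rw [h, hroot, mul_zero]
    obtain ⟨x, y, hker1, hker2, hxy⟩ :
        ∃ x y : ℝ, P11*x + P12*y = 0 ∧ P12*x + P22*y = 0 ∧ ¬(x = 0 ∧ y = 0) := by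
      by_cases h11 : P11 = 0
      · have h12 : P12 = 0 := by
          have : P12^2 = 0 := by rw [h11] at hdet; linarith
          exact pow_eq_zero_iff two_ne_zero |>.mp this
        exact ⟨1, 0, by rw [h11, h12]; ring, by rw [h12]; ring, by simp⟩
      · exact ⟨P12, -P11, by ring, by linear_combination -hdet, by
          rintro ⟨-, hy⟩; exact h11 (neg_eq_zero.mp hy)⟩
    refine ⟨(b+s)*x - b*y, -(a*x) - b*y, -(a*x) + (a+s)*y, by ring, ?_, ?_⟩
    · have hN : a*((b+s)*x - b*y)^2 + s*(-(a*x) - b*y)^2 + b*(-(a*x) + (a+s)*y)^2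
          = nn*(a*(b+s)*x^2 - 2*a*b*x*y + b*(a+s)*y^2) := by rw [hnn]; ring
      rw [hN]
      have hnnpos : 0 < nn := by rw [hnn]; linarith
      have hQ : 0 < a*(b+s)*x^2 + 2*(-(a*b))*x*y + b*(a+s)*y^2 := by
        apply posdef_aux _ _ _ _ _ (by positivity) _ hxy
        have hdd : a*(b+s)*(b*(a+s)) - (-(a*b))*(-(a*b)) = a*b*(s*(a+b+s)) := by ring
        rw [hdd]
        positivity
      have hrw2 : a*(b+s)*x^2 - 2*a*b*x*y + b*(a+s)*y^2
          = a*(b+s)*x^2 + 2*(-(a*b))*x*y + b*(a+s)*y^2 := by ring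
      rw [hrw2]
      positivity
    · have h1 : ((b+s)*x - b*y) - (-(a*x) - b*y) = nn*x := by rw [hnn]; ring
      have h2 : (-(a*x) - b*y) - (-(a*x) + (a+s)*y) = -(nn*y) := by rw [hnn]; ring
      rw [h1, h2]
      have expand : e1*(nn*x)^2 + e2*(-(nn*y))^2
          - θ*(a*((b+s)*x - b*y)^2 + s*(-(a*x) - b*y)^2 + b*(-(a*x) + (a+s)*y)^2)
          = nn*(x*(P11*x + P12*y) + y*(P12*x + P22*y)) := by
        rw [hP11, hP12, hP22, hnn]; ring
      rw [hker1, hker2] at expand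
      linarith [expand]
  obtain ⟨α, β, γ, ho, hpos, heq⟩ := key θ2 hroot2
  obtain ⟨α', β', γ', -, hpos', heq'⟩ := key θ1 hroot1
  have hμθ2 : μ ≤ θ2 := by
    have h := H1 α β γ ho
    rw [heq] at h
    exact le_of_mul_le_mul_right (by linarith) hpos
  have hθ1M : θ1 ≤ M := by
    have h := H2 α' β' γ'
    rw [heq'] at h
    exact le_of_mul_le_mul_right (by linarith) hpos'
  -- key inequality : (s+2a)*θ2 ≤ s*θ1
  have hkey : (s+2*a)*θ2 ≤ s*θ1 := by
    have h1 : 4*A2*C2*((s+a)^2) ≤ B2^2*(s*(s+2*a)) := by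
      have t1 : 0 ≤ (e1*b*(a+s) - e2*a*(b+s))^2 * (s*(s+2*a)) := by positivity
      have amgm : B2^2*(s*(s+2*a)) = 4*(e1*e2*a*b*(a+s)*(b+s))*(s*(s+2*a))
          + (e1*b*(a+s) - e2*a*(b+s))^2*(s*(s+2*a)) := by rw [hB2]; ring
      have t2 : 4*(e1*e2*a*b*(a+s)*(b+s))*(s*(s+2*a)) - 4*A2*C2*((s+a)^2)
          = 4*(e1*e2*a*b*s)*((s+a)*(a*(b-a))) := by rw [hA2, hC2, hnn]; ring
      have t3 : 0 ≤ 4*(e1*e2*a*b*s)*((s+a)*(a*(b-a))) := by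
        apply mul_nonneg (by positivity)
        exact mul_nonneg (by positivity) (mul_nonneg ha0.le (by linarith))
      linarith
    have hstep : a*B2 ≤ (s+a)*Real.sqrt d := by
      have hsq2 : (a*B2)^2 ≤ ((s+a)*Real.sqrt d)^2 := by
        have hrw : ((s+a)*Real.sqrt d)^2 = (s+a)^2*d := by
          rw [mul_pow, hsq]
        rw [hrw, hd]
        linarith [h1, sq_nonneg B2]
      exact sqrt_compare_aux _ _ (mul_nonneg ha0.le hB2nn)
        (mul_nonneg (by positivity : (0:ℝ) ≤ s+a) hsqnn) hsq2
    have hdiff : s*θ1 - (s+2*a)*θ2 = ((s+a)*Real.sqrt d - a*B2)/A2 := by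
      rw [hθ1, hθ2]; field_simp; ring
    have h3 : 0 ≤ ((s+a)*Real.sqrt d - a*B2)/A2 :=
      div_nonneg (by linarith) hA2pos.le
    linarith
  linarith [mul_nonneg hspos.le (sub_nonneg.mpr hθ1M),
    mul_nonneg hspos.le (sub_nonneg.mpr hμθ2),
    mul_nonneg ha0.le (sub_nonneg.mpr hμθ2), hkey]


section counting

variable {n : ℕ} (G : SimpleGraph (Fin n)) [DecidableRel G.Adj]

theorem cut_quadform (X Y S : Finset (Fin n)) (hXY : Disjoint X Y)
    (hcompl : X ∪ Y = Sᶜ)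
    (hnoedge : ∀ x ∈ X, ∀ y ∈ Y, ¬ G.Adj x y) (α β γ : ℝ) :
    (fun i => if i ∈ X then α else if i ∈ Y then γ else β) ⬝ᵥ
      (G.lapMatrix ℝ *ᵥ (fun i => if i ∈ X then α else if i ∈ Y then γ else β))
    = (∑ i ∈ X, ∑ j ∈ S, (if G.Adj i j then (1:ℝ) else 0)) * (α-β)^2
      + (∑ i ∈ Y, ∑ j ∈ S, (if G.Adj i j then (1:ℝ) else 0)) * (β-γ)^2 := by
  set v : Fin n → ℝ := fun i => if i ∈ X then α else if i ∈ Y then γ else β with hv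
  have hXS : ∀ i ∈ X, i ∉ S := by
    intro i hi
    rw [← Finset.mem_compl, ← hcompl]
    exact Finset.mem_union_left Y hi
  have hYS : ∀ i ∈ Y, i ∉ S := by
    intro i hi
    rw [← Finset.mem_compl, ← hcompl]
    exact Finset.mem_union_right X hi
  have hYX : ∀ i ∈ Y, i ∉ X := fun i hi hx => (Finset.disjoint_left.mp hXY) hx hi
  have hSX : ∀ i ∈ S, i ∉ X := fun i hi hx => hXS i hx hi
  have hSY : ∀ i ∈ S, i ∉ Y := fun i hi hy => hYS i hy hi
  have hvX : ∀ i ∈ X, v i = α := fun i hi => by simp [hv, hi]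
  have hvY : ∀ i ∈ Y, v i = γ := fun i hi => by simp [hv, hYX i hi, hi]
  have hvS : ∀ i ∈ S, v i = β := fun i hi => by simp [hv, hSX i hi, hSY i hi]
  have hpart : ∀ f : Fin n → ℝ,
      ∑ i, f i = ∑ i ∈ X, f i + ∑ i ∈ Y, f i + ∑ i ∈ S, f i := by
    intro f
    calc ∑ i, f i = ∑ i ∈ Sᶜ, f i + ∑ i ∈ S, f i := (Finset.sum_compl_add_sum S f).symm
      _ = ∑ i ∈ X ∪ Y, f i + ∑ i ∈ S, f i := by rw [hcompl]
      _ = ∑ i ∈ X, f i + ∑ i ∈ Y, f i + ∑ i ∈ S, f i := by rw [Finset.sum_union hXY]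
  rw [← toLinearMap₂'_apply', lapMatrix_toLinearMap₂']
  have hXX : ∑ i ∈ X, ∑ j ∈ X, (if G.Adj i j then (v i - v j)^2 else 0) = 0 :=
    Finset.sum_eq_zero fun i hi => Finset.sum_eq_zero fun j hj => by
      rw [hvX i hi, hvX j hj]; simp
  have hYY : ∑ i ∈ Y, ∑ j ∈ Y, (if G.Adj i j then (v i - v j)^2 else 0) = 0 :=
    Finset.sum_eq_zero fun i hi => Finset.sum_eq_zero fun j hj => by
      rw [hvY i hi, hvY j hj]; simp
  have hSS : ∑ i ∈ S, ∑ j ∈ S, (if G.Adj i j then (v i - v j)^2 else 0) = 0 :=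
    Finset.sum_eq_zero fun i hi => Finset.sum_eq_zero fun j hj => by
      rw [hvS i hi, hvS j hj]; simp
  have hXYs : ∑ i ∈ X, ∑ j ∈ Y, (if G.Adj i j then (v i - v j)^2 else 0) = 0 :=
    Finset.sum_eq_zero fun i hi => Finset.sum_eq_zero fun j hj => by
      rw [if_neg (hnoedge i hi j hj)]
  have hYXs : ∑ i ∈ Y, ∑ j ∈ X, (if G.Adj i j then (v i - v j)^2 else 0) = 0 :=
    Finset.sum_eq_zero fun i hi => Finset.sum_eq_zero fun j hj => by
      rw [if_neg (fun h => (hnoedge j hj i hi) h.symm)]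
  have hXSs : ∑ i ∈ X, ∑ j ∈ S, (if G.Adj i j then (v i - v j)^2 else 0)
      = (∑ i ∈ X, ∑ j ∈ S, (if G.Adj i j then (1:ℝ) else 0)) * (α-β)^2 := by
    rw [Finset.sum_mul]
    refine Finset.sum_congr rfl fun i hi => ?_
    rw [Finset.sum_mul]
    refine Finset.sum_congr rfl fun j hj => ?_
    rw [hvX i hi, hvS j hj]
    split_ifs <;> ring
  have hYSs : ∑ i ∈ Y, ∑ j ∈ S, (if G.Adj i j then (v i - v j)^2 else 0)
      = (∑ i ∈ Y, ∑ j ∈ S, (if G.Adj i j then (1:ℝ) else 0)) * (β-γ)^2 := by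
    rw [Finset.sum_mul]
    refine Finset.sum_congr rfl fun i hi => ?_
    rw [Finset.sum_mul]
    refine Finset.sum_congr rfl fun j hj => ?_
    rw [hvY i hi, hvS j hj]
    split_ifs <;> ring
  have hSXs : ∑ i ∈ S, ∑ j ∈ X, (if G.Adj i j then (v i - v j)^2 else 0)
      = (∑ i ∈ X, ∑ j ∈ S, (if G.Adj i j then (1:ℝ) else 0)) * (α-β)^2 := by
    rw [Finset.sum_comm, Finset.sum_mul]
    refine Finset.sum_congr rfl fun i hi => ?_
    rw [Finset.sum_mul]
    refine Finset.sum_congr rfl fun j hj => ?_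
    rw [hvX i hi, hvS j hj]
    rw [if_congr (G.adj_comm i j) rfl rfl]
    split_ifs <;> ring
  have hSYs : ∑ i ∈ S, ∑ j ∈ Y, (if G.Adj i j then (v i - v j)^2 else 0)
      = (∑ i ∈ Y, ∑ j ∈ S, (if G.Adj i j then (1:ℝ) else 0)) * (β-γ)^2 := by
    rw [Finset.sum_comm, Finset.sum_mul]
    refine Finset.sum_congr rfl fun i hi => ?_
    rw [Finset.sum_mul]
    refine Finset.sum_congr rfl fun j hj => ?_
    rw [hvY i hi, hvS j hj]
    rw [if_congr (G.adj_comm i j) rfl rfl]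
    split_ifs <;> ring
  rw [hpart (fun i => ∑ j, (if G.Adj i j then (v i - v j)^2 else 0))]
  rw [Finset.sum_congr rfl (fun i (_ : i ∈ X) => hpart (fun j => if G.Adj i j then (v i - v j)^2 else 0)),
      Finset.sum_congr rfl (fun i (_ : i ∈ Y) => hpart (fun j => if G.Adj i j then (v i - v j)^2 else 0)),
      Finset.sum_congr rfl (fun i (_ : i ∈ S) => hpart (fun j => if G.Adj i j then (v i - v j)^2 else 0))]
  rw [Finset.sum_add_distrib, Finset.sum_add_distrib, Finset.sum_add_distrib,
      Finset.sum_add_distrib, Finset.sum_add_distrib, Finset.sum_add_distrib]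
  rw [hXX, hYY, hSS, hXYs, hYXs, hXSs, hYSs, hSXs, hSYs]
  ring

theorem cut_dot_self (X Y S : Finset (Fin n)) (hXY : Disjoint X Y)
    (hcompl : X ∪ Y = Sᶜ) (α β γ : ℝ) :
    (fun i => if i ∈ X then α else if i ∈ Y then γ else β) ⬝ᵥ
      (fun i => if i ∈ X then α else if i ∈ Y then γ else β)
    = X.card * α^2 + S.card * β^2 + Y.card * γ^2 := by
  set v : Fin n → ℝ := fun i => if i ∈ X then α else if i ∈ Y then γ else β with hv
  have hYX : ∀ i ∈ Y, i ∉ X := fun i hi hx => (Finset.disjoint_left.mp hXY) hx hi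
  have hSX : ∀ i ∈ S, i ∉ X := by
    intro i hi hx
    have : i ∈ Sᶜ := by rw [← hcompl]; exact Finset.mem_union_left Y hx
    exact (Finset.mem_compl.mp this) hi
  have hSY : ∀ i ∈ S, i ∉ Y := by
    intro i hi hy
    have : i ∈ Sᶜ := by rw [← hcompl]; exact Finset.mem_union_right X hy
    exact (Finset.mem_compl.mp this) hi
  have hpart : ∀ f : Fin n → ℝ,
      ∑ i, f i = ∑ i ∈ X, f i + ∑ i ∈ Y, f i + ∑ i ∈ S, f i := by
    intro f
    calc ∑ i, f i = ∑ i ∈ Sᶜ, f i + ∑ i ∈ S, f i := (Finset.sum_compl_add_sum S f).symm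
      _ = ∑ i ∈ X ∪ Y, f i + ∑ i ∈ S, f i := by rw [hcompl]
      _ = ∑ i ∈ X, f i + ∑ i ∈ Y, f i + ∑ i ∈ S, f i := by rw [Finset.sum_union hXY]
  rw [show v ⬝ᵥ v = ∑ i, v i * v i from rfl, hpart]
  have h1 : ∑ i ∈ X, v i * v i = X.card * (α*α) := by
    rw [Finset.sum_congr rfl (fun i hi => by rw [show v i = α from by simp [hv, hi]])]
    rw [Finset.sum_const, nsmul_eq_mul]
  have h2 : ∑ i ∈ Y, v i * v i = Y.card * (γ*γ) := by
    rw [Finset.sum_congr rfl (fun i hi => by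
      rw [show v i = γ from by simp [hv, hYX i hi, hi]])]
    rw [Finset.sum_const, nsmul_eq_mul]
  have h3 : ∑ i ∈ S, v i * v i = S.card * (β*β) := by
    rw [Finset.sum_congr rfl (fun i hi => by
      rw [show v i = β from by simp [hv, hSX i hi, hSY i hi]])]
    rw [Finset.sum_const, nsmul_eq_mul]
  rw [h1, h2, h3]
  ring

theorem cut_sum (X Y S : Finset (Fin n)) (hXY : Disjoint X Y)
    (hcompl : X ∪ Y = Sᶜ) (α β γ : ℝ) :
    ∑ i, (if i ∈ X then α else if i ∈ Y then γ else β)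
    = X.card * α + S.card * β + Y.card * γ := by
  set v : Fin n → ℝ := fun i => if i ∈ X then α else if i ∈ Y then γ else β with hv
  have hYX : ∀ i ∈ Y, i ∉ X := fun i hi hx => (Finset.disjoint_left.mp hXY) hx hi
  have hSX : ∀ i ∈ S, i ∉ X := by
    intro i hi hx
    have : i ∈ Sᶜ := by rw [← hcompl]; exact Finset.mem_union_left Y hx
    exact (Finset.mem_compl.mp this) hi
  have hSY : ∀ i ∈ S, i ∉ Y := by
    intro i hi hy
    have : i ∈ Sᶜ := by rw [← hcompl]; exact Finset.mem_union_right X hy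
    exact (Finset.mem_compl.mp this) hi
  have hpart : ∀ f : Fin n → ℝ,
      ∑ i, f i = ∑ i ∈ X, f i + ∑ i ∈ Y, f i + ∑ i ∈ S, f i := by
    intro f
    calc ∑ i, f i = ∑ i ∈ Sᶜ, f i + ∑ i ∈ S, f i := (Finset.sum_compl_add_sum S f).symm
      _ = ∑ i ∈ X ∪ Y, f i + ∑ i ∈ S, f i := by rw [hcompl]
      _ = ∑ i ∈ X, f i + ∑ i ∈ Y, f i + ∑ i ∈ S, f i := by rw [Finset.sum_union hXY]
  rw [hpart]
  have h1 : ∑ i ∈ X, v i = X.card * α := by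
    rw [Finset.sum_congr rfl (fun i hi => show v i = α from by simp [hv, hi])]
    rw [Finset.sum_const, nsmul_eq_mul]
  have h2 : ∑ i ∈ Y, v i = Y.card * γ := by
    rw [Finset.sum_congr rfl (fun i hi => show v i = γ from by simp [hv, hYX i hi, hi])]
    rw [Finset.sum_const, nsmul_eq_mul]
  have h3 : ∑ i ∈ S, v i = S.card * β := by
    rw [Finset.sum_congr rfl
      (fun i hi => show v i = β from by simp [hv, hSX i hi, hSY i hi])]
    rw [Finset.sum_const, nsmul_eq_mul]
  rw [h1, h2, h3]
  ring

end counting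

set_option maxHeartbeats 1000000 in
/-- Gu–Liu: if `S` is a vertex cut of `G` separating `X` from `Y` with `|X| ≤ |Y|`, then
`|S| ≥ (2μ_{n-1}/(μ₁ - μ_{n-1}))|X|`, where `μ₁` and `μ_{n-1}` are the largest Laplacian
eigenvalue and the algebraic connectivity of `G`. -/
theorem cut_size_lower_bound {n : ℕ} (G : SimpleGraph (Fin n)) [DecidableRel G.Adj]
    (hE : G.edgeSet.Nonempty) (S X Y : Finset (Fin n))
    (hSsub : (S : Set (Fin n)) ⊂ Set.univ)
    (hdisc : ¬ (SimpleGraph.induce ((↑S : Set (Fin n))ᶜ) G).Connected)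
    (hX : X.Nonempty) (hY : Y.Nonempty) (hXY : Disjoint X Y)
    (hunion : (X : Set (Fin n)) ∪ Y = (↑S : Set (Fin n))ᶜ)
    (hnoedge : ∀ x ∈ X, ∀ y ∈ Y, ¬ G.Adj x y) (hcard : X.card ≤ Y.card) :
    2 * kthLargestEig (G.lapMatrix ℝ) (lapMatrix_isHermitian G) (n - 2) /
        (kthLargestEig (G.lapMatrix ℝ) (lapMatrix_isHermitian G) 0 -
          kthLargestEig (G.lapMatrix ℝ) (lapMatrix_isHermitian G) (n - 2)) * X.card ≤
      (S.card : ℝ) := by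
  classical
  have hcompl : X ∪ Y = Sᶜ := by
    apply Finset.coe_injective
    rw [Finset.coe_union, Finset.coe_compl]
    exact hunion
  have haX : 1 ≤ X.card := Finset.card_pos.mpr hX
  have hbY : 1 ≤ Y.card := Finset.card_pos.mpr hY
  have hcards : X.card + Y.card + S.card = n := by
    have h1 : (X ∪ Y).card = X.card + Y.card := Finset.card_union_of_disjoint hXY
    have h2 : Sᶜ.card = Fintype.card (Fin n) - S.card := Finset.card_compl S
    have h3 : S.card ≤ Fintype.card (Fin n) := Finset.card_le_univ S
    have h4 : Fintype.card (Fin n) = n := Fintype.card_fin n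
    rw [hcompl] at h1
    omega
  have hn2 : 2 ≤ n := by omega
  have hidx2 : n - 1 - (n - 2) < n := by omega
  have hidx0 : n - 1 - 0 < n := by omega
  have hμ0 : 0 ≤ kthLargestEig (G.lapMatrix ℝ) (lapMatrix_isHermitian G) (n - 2) := by
    rw [kthLargestEig, dif_pos hidx2]
    exact (G.posSemidef_lapMatrix ℝ).eigenvalues_nonneg _
  have hμM : kthLargestEig (G.lapMatrix ℝ) (lapMatrix_isHermitian G) (n - 2)
      ≤ kthLargestEig (G.lapMatrix ℝ) (lapMatrix_isHermitian G) 0 := by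
    rw [kthLargestEig, kthLargestEig, dif_pos hidx2, dif_pos hidx0]
    exact Tuple.monotone_sort (lapMatrix_isHermitian G).eigenvalues
      (Fin.mk_le_mk.mpr (by omega))
  rcases eq_or_lt_of_le hμ0 with hμz | hμpos
  · rw [← hμz]
    simp only [mul_zero, zero_div, zero_mul]
    exact Nat.cast_nonneg _
  · rcases eq_or_lt_of_le hμM with hMeq | hMlt
    · rw [hMeq, sub_self, div_zero, zero_mul]
      exact Nat.cast_nonneg _
    · rw [div_mul_eq_mul_div, div_le_iff₀ (by linarith)]
      set E1 : ℝ := ∑ i ∈ X, ∑ j ∈ S, (if G.Adj i j then (1:ℝ) else 0) with hE1def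
      set E2 : ℝ := ∑ i ∈ Y, ∑ j ∈ S, (if G.Adj i j then (1:ℝ) else 0) with hE2def
      have he1 : 0 ≤ E1 := by
        rw [hE1def]
        exact Finset.sum_nonneg fun i _ => Finset.sum_nonneg fun j _ => by
          split_ifs <;> norm_num
      have he2 : 0 ≤ E2 := by
        rw [hE2def]
        exact Finset.sum_nonneg fun i _ => Finset.sum_nonneg fun j _ => by
          split_ifs <;> norm_num
      have he1' : E1 ≤ (X.card : ℝ) * S.card := by
        rw [hE1def]
        calc ∑ i ∈ X, ∑ j ∈ S, (if G.Adj i j then (1:ℝ) else 0)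
            ≤ ∑ i ∈ X, ∑ j ∈ S, (1:ℝ) :=
              Finset.sum_le_sum fun i _ => Finset.sum_le_sum fun j _ => by
                split_ifs <;> norm_num
          _ = (X.card : ℝ) * S.card := by
              simp [Finset.sum_const, nsmul_eq_mul]
      have he2' : E2 ≤ (Y.card : ℝ) * S.card := by
        rw [hE2def]
        calc ∑ i ∈ Y, ∑ j ∈ S, (if G.Adj i j then (1:ℝ) else 0)
            ≤ ∑ i ∈ Y, ∑ j ∈ S, (1:ℝ) :=
              Finset.sum_le_sum fun i _ => Finset.sum_le_sum fun j _ => by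
                split_ifs <;> norm_num
          _ = (Y.card : ℝ) * S.card := by
              simp [Finset.sum_const, nsmul_eq_mul]
      have H1 : ∀ α β γ : ℝ,
          (X.card : ℝ)*α + (S.card : ℝ)*β + (Y.card : ℝ)*γ = 0 →
          kthLargestEig (G.lapMatrix ℝ) (lapMatrix_isHermitian G) (n - 2) *
            ((X.card : ℝ)*α^2 + (S.card : ℝ)*β^2 + (Y.card : ℝ)*γ^2)
          ≤ E1*(α-β)^2 + E2*(β-γ)^2 := by
        intro α β γ hc
        have hray := rayleigh_lower G hn2
          (fun i => if i ∈ X then α else if i ∈ Y then γ else β)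
          (by rw [cut_sum X Y S hXY hcompl]; exact hc)
        rw [cut_dot_self X Y S hXY hcompl, cut_quadform G X Y S hXY hcompl hnoedge] at hray
        rw [hE1def, hE2def]
        exact hray
      have H2 : ∀ α β γ : ℝ,
          E1*(α-β)^2 + E2*(β-γ)^2
          ≤ kthLargestEig (G.lapMatrix ℝ) (lapMatrix_isHermitian G) 0 *
            ((X.card : ℝ)*α^2 + (S.card : ℝ)*β^2 + (Y.card : ℝ)*γ^2) := by
        intro α β γ
        have hray := rayleigh_upper (lapMatrix_isHermitian G) (by omega : 0 < n)
          (fun i => if i ∈ X then α else if i ∈ Y then γ else β)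
        rw [cut_dot_self X Y S hXY hcompl, cut_quadform G X Y S hXY hcompl hnoedge] at hray
        rw [hE1def, hE2def]
        exact hray
      exact gu_liu_core (X.card : ℝ) (Y.card : ℝ) (S.card : ℝ) E1 E2
        (kthLargestEig (G.lapMatrix ℝ) (lapMatrix_isHermitian G) (n - 2))
        (kthLargestEig (G.lapMatrix ℝ) (lapMatrix_isHermitian G) 0)
        (by exact_mod_cast haX) (by exact_mod_cast hcard) (Nat.cast_nonneg _)
        he1 he1' he2 he2' hμpos H1 H2
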